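/- Let X be a Banach space and T ∈ L(X). Suppose there exists a closed subspace Y ⊆ X such that T restricted to Y is an isomorphism (bounded below) and d(Y, T(Y)) > 0. Then for every scalar λ, (T − λI) restricted to Y is an isomorphism and d(Y, (T − λI)(Y)) > 0. -/

import Mathlib

/-- The distance `d(X,Y) = inf {‖x - y‖ : x ∈ S_X, y ∈ Y}` between subspaces. -/
noncomputable def subspaceDist {Z : Type*} [NormedAddCommGroup Z] [NormedSpace ℂ Z]
    (X Y : Submodule ℂ Z) : ℝ :=
  sInf {r : ℝ | ∃ x ∈ X, ‖x‖ = 1 ∧ ∃ y ∈ Y, r = ‖x - y‖}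

/-- Homogeneous form of the distance lower bound. -/
lemma subspaceDist_le_aux {X : Type*} [NormedAddCommGroup X] [NormedSpace ℂ X]
    (Y W : Submodule ℂ X) (u : X) (hu : u ∈ Y) (w : X) (hw : w ∈ W) :
    subspaceDist Y W * ‖u‖ ≤ ‖u - w‖ := by
  rcases eq_or_ne u 0 with rfl | hu0
  · simpa using norm_nonneg (0 - w)
  have hnu : (0:ℝ) < ‖u‖ := norm_pos_iff.mpr hu0
  have hbdd : BddBelow {r : ℝ | ∃ x ∈ Y, ‖x‖ = 1 ∧ ∃ y ∈ W, r = ‖x - y‖} := by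
    refine ⟨0, ?_⟩
    rintro r ⟨x, -, -, y, -, rfl⟩
    exact norm_nonneg _
  have hmem : ‖u - w‖ / ‖u‖ ∈ {r : ℝ | ∃ x ∈ Y, ‖x‖ = 1 ∧ ∃ y ∈ W, r = ‖x - y‖} := by
    refine ⟨((‖u‖:ℂ)⁻¹) • u, Y.smul_mem _ hu, ?_, ((‖u‖:ℂ)⁻¹) • w, W.smul_mem _ hw, ?_⟩
    · rw [norm_smul]
      simp [hnu.ne']
    · rw [← smul_sub, norm_smul]
      simp [div_eq_inv_mul]
  have h := csInf_le hbdd hmem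
  calc subspaceDist Y W * ‖u‖ ≤ (‖u - w‖ / ‖u‖) * ‖u‖ := by
        exact mul_le_mul_of_nonneg_right h (norm_nonneg _)
    _ = ‖u - w‖ := by field_simp

/-- If `T` is bounded below on `Y` and `d(Y, T(Y)) > 0`, then for every `λ ∈ ℂ` the operator
`T - λI` is bounded below on `Y` and `d(Y, (T - λI)(Y)) > 0`. -/
theorem translate_isomorphism_dist_pos {X : Type*} [NormedAddCommGroup X] [NormedSpace ℂ X]
    [CompleteSpace X] (T : X →L[ℂ] X) (Y : Submodule ℂ X) (hY : IsClosed (Y : Set X))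
    (hiso : ∃ c > 0, ∀ y ∈ Y, c * ‖y‖ ≤ ‖T y‖)
    (hdist : 0 < subspaceDist Y (Y.map (T : X →ₗ[ℂ] X))) :
    ∀ lam : ℂ, (∃ c > 0, ∀ y ∈ Y, c * ‖y‖ ≤ ‖(T - lam • ContinuousLinearMap.id ℂ X) y‖) ∧
      0 < subspaceDist Y (Y.map ((T - lam • ContinuousLinearMap.id ℂ X : X →L[ℂ] X) : X →ₗ[ℂ] X)) := by
  obtain ⟨c, hc, hbelow⟩ := hiso
  set d := subspaceDist Y (Y.map (T : X →ₗ[ℂ] X)) with hd_def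
  have hd : 0 < d := hdist
  have hd1 : (0:ℝ) < 1 + d := by linarith
  -- key estimate A : d * ‖u‖ ≤ ‖u - T z‖ for u z ∈ Y
  have keyA : ∀ u ∈ Y, ∀ z ∈ Y, d * ‖u‖ ≤ ‖u - T z‖ := by
    intro u hu z hz
    exact subspaceDist_le_aux Y (Y.map (T : X →ₗ[ℂ] X)) u hu (T z) ⟨z, hz, rfl⟩
  -- key estimate B : (d/(1+d)) * ‖T z‖ ≤ ‖u - T z‖
  have keyB : ∀ u ∈ Y, ∀ z ∈ Y, d / (1 + d) * ‖T z‖ ≤ ‖u - T z‖ := by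
    intro u hu z hz
    have h1 : d * ‖u‖ ≤ ‖u - T z‖ := keyA u hu z hz
    have h2 : ‖T z‖ ≤ ‖u‖ + ‖u - T z‖ := by
      calc ‖T z‖ = ‖u - (u - T z)‖ := by rw [sub_sub_cancel]
        _ ≤ ‖u‖ + ‖u - T z‖ := norm_sub_le _ _
    rw [div_mul_eq_mul_div, div_le_iff₀ hd1]
    nlinarith [mul_le_mul_of_nonneg_left h2 hd.le]
  -- the old set is nonempty, giving a unit vector in Y
  have hYunit : ∃ x ∈ Y, ‖x‖ = 1 := by
    by_contra h
    push_neg at h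
    have : {r : ℝ | ∃ x ∈ Y, ‖x‖ = 1 ∧ ∃ y ∈ Y.map (T : X →ₗ[ℂ] X), r = ‖x - y‖} = ∅ := by
      ext r
      simp only [Set.mem_setOf_eq, Set.mem_empty_iff_false, iff_false]
      rintro ⟨x, hx, hx1, -⟩
      exact h x hx hx1
    have h0 : d = 0 := by
      rw [hd_def, subspaceDist, this, Real.sInf_empty]
    linarith
  intro lam
  have happly : ∀ z : X, (T - lam • ContinuousLinearMap.id ℂ X) z = T z - lam • z := by
    intro z; simp
  constructor
  · -- bounded below with constant c * d / (1 + d), uniform in lam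
    refine ⟨c * d / (1 + d), by positivity, ?_⟩
    intro y hy
    rw [happly]
    have h1 : d / (1 + d) * ‖T y‖ ≤ ‖lam • y - T y‖ :=
      keyB (lam • y) (Y.smul_mem _ hy) y hy
    have h2 : c * ‖y‖ ≤ ‖T y‖ := hbelow y hy
    have h3 : ‖T y - lam • y‖ = ‖lam • y - T y‖ := norm_sub_rev _ _
    rw [h3]
    have h4 : d / (1 + d) * (c * ‖y‖) ≤ d / (1 + d) * ‖T y‖ :=
      mul_le_mul_of_nonneg_left h2 (by positivity)
    calc c * d / (1 + d) * ‖y‖ = d / (1 + d) * (c * ‖y‖) := by ring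
      _ ≤ ‖lam • y - T y‖ := le_trans h4 h1
  · -- distance bound
    set L := ‖lam‖ with hL_def
    have hL : 0 ≤ L := norm_nonneg _
    set D := c + L * (1 + d) with hD_def
    have hD : 0 < D := by positivity
    set δ := c * d / D with hδ_def
    have hδ : 0 < δ := by positivity
    have hmain : ∀ r ∈ {r : ℝ | ∃ x ∈ Y, ‖x‖ = 1 ∧
        ∃ y ∈ Y.map ((T - lam • ContinuousLinearMap.id ℂ X : X →L[ℂ] X) : X →ₗ[ℂ] X), r = ‖x - y‖}, δ ≤ r := by
      rintro r ⟨x, hx, hx1, -, ⟨z, hz, rfl⟩, rfl⟩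
      rw [ContinuousLinearMap.coe_coe, happly]
      have hxz : x - (T z - lam • z) = (x + lam • z) - T z := by abel
      rw [hxz]
      have hu : x + lam • z ∈ Y := Y.add_mem hx (Y.smul_mem _ hz)
      by_cases hcase : ‖z‖ * D ≤ 1 + d
      · -- small z : use keyA
        have h1 : d * ‖x + lam • z‖ ≤ ‖(x + lam • z) - T z‖ := keyA _ hu z hz
        have h2 : (1 : ℝ) - L * ‖z‖ ≤ ‖x + lam • z‖ := by
          have := norm_add_le (x + lam • z) (-(lam • z))
          simp only [add_neg_cancel_right, norm_neg, norm_smul] at this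
          rw [hx1] at this
          linarith
        have h3 : δ ≤ d * (1 - L * ‖z‖) := by
          rw [hδ_def, div_le_iff₀ hD]
          have hq : L * (‖z‖ * D) ≤ L * (1 + d) := mul_le_mul_of_nonneg_left hcase hL
          nlinarith [mul_le_mul_of_nonneg_left hq hd.le]
        calc δ ≤ d * (1 - L * ‖z‖) := h3
          _ ≤ d * ‖x + lam • z‖ := mul_le_mul_of_nonneg_left h2 hd.le
          _ ≤ _ := h1
      · -- large z : use keyB and lower bound on ‖T z‖
        push_neg at hcase
        have h1 : d / (1 + d) * ‖T z‖ ≤ ‖(x + lam • z) - T z‖ := keyB _ hu z hz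
        have h2 : c * ‖z‖ ≤ ‖T z‖ := hbelow z hz
        have h3 : δ ≤ d / (1 + d) * (c * ‖z‖) := by
          rw [hδ_def, div_le_iff₀ hD, div_mul_eq_mul_div, div_mul_eq_mul_div,
            le_div_iff₀ hd1]
          nlinarith [mul_le_mul_of_nonneg_left hcase.le (mul_pos hc hd).le]
        calc δ ≤ d / (1 + d) * (c * ‖z‖) := h3
          _ ≤ d / (1 + d) * ‖T z‖ := mul_le_mul_of_nonneg_left h2 (by positivity)
          _ ≤ _ := h1
    have hne : {r : ℝ | ∃ x ∈ Y, ‖x‖ = 1 ∧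
        ∃ y ∈ Y.map ((T - lam • ContinuousLinearMap.id ℂ X : X →L[ℂ] X) : X →ₗ[ℂ] X), r = ‖x - y‖}.Nonempty := by
      obtain ⟨x, hx, hx1⟩ := hYunit
      exact ⟨‖x - 0‖, x, hx, hx1, 0, Submodule.zero_mem _, rfl⟩
    have := le_csInf hne hmain
    calc (0:ℝ) < δ := hδ
      _ ≤ _ := this
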